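/- Let (x_n) be a sequence in a Banach space X, and define B(x) = {A ⊆ ℕ : ∃k>0 ∀F ⊆ A finite, ‖Σ_{n∈F} x_n‖ ≤ k}. If B(x) is tall (every infinite subset of ℕ contains an infinite member of B(x)), then (x_n) is weakly null: x*(x_n) → 0 for every continuous linear functional x* on X. -/
import Mathlib


open Filter

private lemma stmt17_aux {X : Type*} [NormedAddCommGroup X] [NormedSpace ℝ X]
    (x : ℕ → X) (g : X →L[ℝ] ℝ) (ε : ℝ) (hε : 0 < ε)
    (A : Set ℕ) (hA : A.Infinite) (hge : ∀ n ∈ A, ε ≤ g (x n))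
    (htall : ∀ A : Set ℕ, A.Infinite → ∃ B ⊆ A, B.Infinite ∧
      ∃ k : ℝ, 0 < k ∧ ∀ F : Finset ℕ, ↑F ⊆ B → ‖∑ n ∈ F, x n‖ ≤ k) : False := by
  obtain ⟨B, hBA, hBinf, k, hk, hbd⟩ := htall A hA
  obtain ⟨N, hN⟩ := exists_nat_gt (‖g‖ * k / ε)
  obtain ⟨F, hFB, hFcard⟩ := hBinf.exists_subset_card_eq N
  have h1 : (N : ℝ) * ε ≤ ∑ n ∈ F, g (x n) := by
    calc (N : ℝ) * ε = ∑ _n ∈ F, ε := by rw [Finset.sum_const, hFcard, nsmul_eq_mul]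
    _ ≤ ∑ n ∈ F, g (x n) := Finset.sum_le_sum fun n hn => hge n (hBA (hFB hn))
  have h2 : ∑ n ∈ F, g (x n) ≤ ‖g‖ * k := by
    rw [← map_sum]
    calc g (∑ n ∈ F, x n) ≤ ‖g (∑ n ∈ F, x n)‖ := le_abs_self _
    _ ≤ ‖g‖ * ‖∑ n ∈ F, x n‖ := g.le_opNorm _
    _ ≤ ‖g‖ * k := by
        have := norm_nonneg g
        gcongr
        exact hbd F hFB
  rw [div_lt_iff₀ hε] at hN
  linarith

theorem stmt17 {X : Type*} [NormedAddCommGroup X] [NormedSpace ℝ X] [CompleteSpace X]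
    (x : ℕ → X)
    -- B(x) is tall:
    (htall : ∀ A : Set ℕ, A.Infinite → ∃ B ⊆ A, B.Infinite ∧
      ∃ k : ℝ, 0 < k ∧ ∀ F : Finset ℕ, ↑F ⊆ B → ‖∑ n ∈ F, x n‖ ≤ k) :
    -- (x_n) is weakly null:
    ∀ f : X →L[ℝ] ℝ, Tendsto (fun n : ℕ => f (x n)) atTop (nhds 0) := by
  intro f
  by_contra h
  rw [NormedAddCommGroup.tendsto_nhds_zero] at h
  push_neg at h
  obtain ⟨ε, hε, hfreq⟩ := h
  have hinf : {n : ℕ | ε ≤ ‖f (x n)‖}.Infinite := by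
    rw [← Nat.frequently_atTop_iff_infinite]
    simpa only [Filter.not_eventually, not_lt] using hfreq
  have hsub : {n : ℕ | ε ≤ ‖f (x n)‖} ⊆
      {n : ℕ | ε ≤ f (x n)} ∪ {n : ℕ | ε ≤ -f (x n)} := fun n hn =>
    (le_abs.mp (by simpa [Real.norm_eq_abs] using hn)).imp id id
  rcases Set.infinite_union.mp (hinf.mono hsub) with hpos | hneg
  · exact stmt17_aux x f ε hε _ hpos (fun n hn => hn) htall
  · exact stmt17_aux x (-f) ε hε _ hneg (fun n hn => by simpa using hn) htall
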